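/- For every real α > 2 and every real x ≥ 0: e^{−x} · ∑_{k=0}^∞ x^k·(2k+α)/[(1+α/2)_k·(α−2)] = (α/(α−2))·F₁(x) + (4x/(α²−4))·F₂(x), where F_n(x) = ∑_{m=0}^∞ [(α/2)_m/(n+α/2)_m]·(−x)^m/m! and (a)_m = Γ(a+m)/Γ(a) is the Pochhammer symbol. -/

import Mathlib

/-- The Pochhammer symbol (rising factorial) `(a)_m = Γ(a+m)/Γ(a)`. -/
noncomputable def poch (a : ℝ) (m : ℕ) : ℝ := Real.Gamma (a + m) / Real.Gamma a

/-- The confluent hypergeometric series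
`F_n(x) = ∑_{m=0}^∞ [(α/2)_m/(n+α/2)_m]·(−x)^m/m!`. -/
noncomputable def Fhyp (α : ℝ) (n : ℕ) (x : ℝ) : ℝ :=
  ∑' m : ℕ, poch (α / 2) m / poch ((n : ℝ) + α / 2) m * (-x) ^ m / (m.factorial : ℝ)

open Finset

lemma prodP_pos {a : ℝ} (ha : 0 < a) (k : ℕ) : 0 < ∏ i ∈ range k, (a + i) :=
  Finset.prod_pos fun i _ => add_pos_of_pos_of_nonneg ha (Nat.cast_nonneg i)

lemma prodP_shift (a : ℝ) (k : ℕ) :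
    ∏ i ∈ range (k + 1), (a + i) = a * ∏ i ∈ range k, (a + 1 + i) := by
  rw [prod_range_succ']
  simp only [Nat.cast_zero, add_zero]
  rw [mul_comm]
  congr 1
  exact prod_congr rfl fun i _ => by push_cast; ring

lemma prodP_fact_le {a : ℝ} (ha : 1 ≤ a) (k : ℕ) :
    (k.factorial : ℝ) ≤ ∏ i ∈ range k, (a + i) := by
  have : (k.factorial : ℝ) = ∏ i ∈ range k, ((1 : ℝ) + i) := by
    induction k with
    | zero => simp
    | succ n ih => rw [prod_range_succ, ← ih, Nat.factorial_succ]; push_cast; ring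
  rw [this]
  exact Finset.prod_le_prod (fun i _ => by positivity) (fun i _ => by linarith)

lemma poch_eq_prod {a : ℝ} (ha : 0 < a) (k : ℕ) :
    poch a k = ∏ i ∈ range k, (a + i) := by
  induction k with
  | zero => simp [poch, div_self (Real.Gamma_pos_of_pos ha).ne']
  | succ n ih =>
    have hne : a + (n : ℝ) ≠ 0 := (add_pos_of_pos_of_nonneg ha (Nat.cast_nonneg n)).ne'
    rw [prod_range_succ, ← ih, poch, poch,
      show a + ((n + 1 : ℕ) : ℝ) = (a + n) + 1 by push_cast; ring,
      Real.Gamma_add_one hne]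
    ring

lemma keyK : ∀ (n : ℕ) (a : ℝ), 1 < a →
    ∑ j ∈ range (n + 1),
        (-1 : ℝ) ^ j * (n.choose j) * (j.factorial) / ∏ i ∈ range j, (a + i)
      = (a - 1) / (a + n - 1) := by
  intro n
  induction n with
  | zero =>
    intro a ha
    simp only [zero_add, range_one, sum_singleton, pow_zero, Nat.choose_self,
      Nat.cast_one, Nat.factorial_zero, range_zero, prod_empty, mul_one, one_mul,
      div_one, Nat.cast_zero, add_zero]
    rw [div_self (by linarith : a - 1 ≠ 0)]
  | succ n ih =>
    intro a ha
    have ha0 : (0:ℝ) < a := by linarith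
    have ha1 : (1:ℝ) < a + 1 := by linarith
    have hsplit : ∀ j ∈ range (n + 1),
        (-1 : ℝ) ^ (j+1) * ((n+1).choose (j+1)) * ((j+1).factorial) / ∏ i ∈ range (j+1), (a + i)
        = (-1 : ℝ) ^ (j+1) * (n.choose (j+1)) * ((j+1).factorial) / ∏ i ∈ range (j+1), (a + i)
          - (-1 : ℝ) ^ j * (n.choose j) * (j.factorial) / ∏ i ∈ range j, (a + i)
          + (a - 1) / a *
            ((-1 : ℝ) ^ j * (n.choose j) * (j.factorial) / ∏ i ∈ range j, (a + 1 + i)) := by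
      intro j hj
      have hPj : (0:ℝ) < ∏ i ∈ range j, (a + i) := prodP_pos ha0 j
      have hQj : (0:ℝ) < ∏ i ∈ range j, (a + 1 + i) := prodP_pos (by linarith) j
      have haj : (0:ℝ) < a + j := add_pos_of_pos_of_nonneg ha0 (Nat.cast_nonneg j)
      have key : (∏ i ∈ range j, (a + i)) * (a + j) = a * ∏ i ∈ range j, (a + 1 + i) := by
        rw [← prod_range_succ, prodP_shift]
      have hQ : (∏ i ∈ range j, (a + 1 + i)) = (∏ i ∈ range j, (a + i)) * (a + j) / a := by
        field_simp
        linarith [key]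
      rw [Nat.choose_succ_succ, hQ]
      push_cast [Nat.factorial_succ, prod_range_succ]
      field_simp
      ring
    rw [Finset.sum_range_succ']
    rw [Finset.sum_congr rfl hsplit]
    rw [Finset.sum_add_distrib, Finset.sum_sub_distrib, ← Finset.mul_sum]
    have e1 : ∑ j ∈ range (n + 1),
        (-1 : ℝ) ^ (j+1) * (n.choose (j+1)) * ((j+1).factorial) / ∏ i ∈ range (j+1), (a + i)
        = (a - 1) / (a + n - 1) - 1 := by
      have := Finset.sum_range_succ' (fun j =>
        (-1 : ℝ) ^ j * (n.choose j) * (j.factorial) / ∏ i ∈ range j, (a + i)) (n + 1)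
      rw [Finset.sum_range_succ, ih a ha] at this
      simp only [Nat.choose_succ_self] at this
      simp only [pow_zero, Nat.choose_zero_right, Nat.cast_one, Nat.factorial_zero,
        range_zero, prod_empty, mul_one, one_mul, div_one, Nat.cast_zero, zero_mul,
        mul_zero, zero_div, add_zero] at this
      linarith [this]
    rw [e1, ih a ha, ih (a + 1) ha1]
    have h1 : a + (n:ℝ) - 1 ≠ 0 := by
      have : (0:ℝ) ≤ (n:ℝ) := Nat.cast_nonneg n
      intro h; nlinarith
    have h2 : a + (n:ℝ) ≠ 0 := by positivity
    have h3 : a ≠ 0 := ha0.ne'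
    push_cast [Nat.choose_zero_right]
    field_simp
    ring

lemma expser (x : ℝ) : Real.exp x = ∑' n : ℕ, x ^ n / n.factorial := by
  rw [Real.exp_eq_exp_ℝ, NormedSpace.exp_eq_tsum_div]

lemma summable_norm_exp (x : ℝ) : Summable fun n : ℕ => ‖x ^ n / (n.factorial : ℝ)‖ := by
  have := Real.summable_pow_div_factorial |x|
  apply this.congr
  intro n
  simp [Real.norm_eq_abs, abs_div, abs_pow]

lemma summable_norm_S {a : ℝ} (ha : 1 < a) {x : ℝ} (hx : 0 ≤ x) :
    Summable fun k : ℕ => ‖x ^ k / ∏ i ∈ range k, (a + i)‖ := by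
  have hb : ∀ k : ℕ, ‖x ^ k / ∏ i ∈ range k, (a + i)‖ ≤ x ^ k / k.factorial := by
    intro k
    have hP := prodP_pos (by linarith : (0:ℝ) < a) k
    have hf : (0:ℝ) < k.factorial := by positivity
    rw [Real.norm_eq_abs, abs_of_nonneg (by positivity)]
    gcongr
    exact prodP_fact_le (by linarith) k
  exact Summable.of_nonneg_of_le (fun k => norm_nonneg _) hb
    (Real.summable_pow_div_factorial x)

lemma kummer {a : ℝ} (ha : 1 < a) {x : ℝ} (hx : 0 ≤ x) :
    Real.exp (-x) * ∑' k : ℕ, x ^ k / ∏ i ∈ range k, (a + i)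
      = ∑' n : ℕ, ((a - 1) / (a + n - 1)) * ((-x) ^ n / n.factorial) := by
  rw [expser]
  rw [tsum_mul_tsum_eq_tsum_sum_antidiagonal_of_summable_norm
    (summable_norm_exp (-x)) (summable_norm_S ha hx)]
  apply tsum_congr
  intro n
  rw [Finset.Nat.sum_antidiagonal_eq_sum_range_succ
    (fun k l => (-x) ^ k / (k.factorial : ℝ) * (x ^ l / ∏ i ∈ range l, (a + i)))]
  rw [← Finset.sum_range_reflect
    (fun k => (-x) ^ k / (k.factorial : ℝ) * (x ^ (n - k) / ∏ i ∈ range (n - k), (a + i))) (n + 1)]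
  have hstep : ∀ j ∈ range (n + 1),
      (-x) ^ (n + 1 - 1 - j) / ((n + 1 - 1 - j).factorial : ℝ) *
        (x ^ (n - (n + 1 - 1 - j)) / ∏ i ∈ range (n - (n + 1 - 1 - j)), (a + i))
      = ((-1 : ℝ) ^ j * (n.choose j) * (j.factorial) / ∏ i ∈ range j, (a + i)) *
          ((-x) ^ n / n.factorial) := by
    intro j hj
    have hj' : j ≤ n := Nat.lt_succ_iff.mp (Finset.mem_range.mp hj)
    obtain ⟨m, rfl⟩ : ∃ m, n = j + m := ⟨n - j, (Nat.add_sub_cancel' hj').symm⟩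
    have h2 : j + m - m = j := by omega
    have e1 : j + m + 1 - 1 - j = m := by omega
    simp only [e1]
    rw [h2]
    have hfact : ((j + m).factorial : ℝ) = (j + m).choose j * j.factorial * m.factorial := by
      have := Nat.choose_mul_factorial_mul_factorial (Nat.le_add_right j m)
      rw [Nat.add_sub_cancel_left j m] at this
      exact_mod_cast this.symm
    have hP : (0:ℝ) < ∏ i ∈ range j, (a + i) := prodP_pos (by linarith) j
    have hC : (0:ℝ) < (j + m).choose j := by
      exact_mod_cast Nat.cast_pos.mpr (Nat.choose_pos (Nat.le_add_right j m))
    have hxj : (-1 : ℝ) ^ j * (-x) ^ j = x ^ j := by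
      rw [← mul_pow]; norm_num
    rw [hfact, pow_add]
    have hfj : (0:ℝ) < j.factorial := by positivity
    have hfm : (0:ℝ) < m.factorial := by positivity
    have hre : ((-1:ℝ) ^ j * ((j + m).choose j : ℝ) * j.factorial / ∏ i ∈ range j, (a + i)) *
        ((-x) ^ j * (-x) ^ m / (((j + m).choose j : ℝ) * j.factorial * m.factorial))
        = (((-1:ℝ) ^ j * (-x) ^ j) * ((-x) ^ m * ((j + m).choose j : ℝ) * j.factorial)) /
            ((∏ i ∈ range j, (a + i)) * (((j + m).choose j : ℝ) * j.factorial * m.factorial)) := by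
      ring
    rw [hre, hxj]
    field_simp
  rw [Finset.sum_congr rfl hstep, ← Finset.sum_mul, keyK n a ha]

lemma summable_coeff {x : ℝ} (hx : 0 ≤ x) {c : ℕ → ℝ} {M : ℝ} (hc : ∀ n, |c n| ≤ M) :
    Summable fun n : ℕ => c n * ((-x) ^ n / n.factorial) := by
  have hb : ∀ n : ℕ, ‖c n * ((-x) ^ n / n.factorial)‖ ≤ M * (x ^ n / n.factorial) := by
    intro n
    have h1 : ‖c n * ((-x) ^ n / n.factorial)‖ = |c n| * (x ^ n / n.factorial) := by
      rw [norm_mul, Real.norm_eq_abs, Real.norm_eq_abs, abs_div, abs_pow, abs_neg,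
        abs_of_nonneg hx, Nat.abs_cast]
    rw [h1]
    have h2 : (0:ℝ) ≤ x ^ n / n.factorial := by positivity
    exact mul_le_mul_of_nonneg_right (hc n) h2
  exact Summable.of_norm_bounded ((Real.summable_pow_div_factorial x).mul_left M) hb

set_option maxHeartbeats 1000000 in
/-- Combination of two instances of Kummer's transformation: for `α > 2` and `x ≥ 0`,
`e^{−x}·∑_{k=0}^∞ x^k(2k+α)/[(1+α/2)_k(α−2)] = (α/(α−2))·F₁(x) + (4x/(α²−4))·F₂(x)`. -/
theorem stmt_8 (α x : ℝ) (hα : 2 < α) (hx : 0 ≤ x) :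
    Real.exp (-x) *
        ∑' k : ℕ, x ^ k * (2 * (k : ℝ) + α) / (poch (1 + α / 2) k * (α - 2))
      = α / (α - 2) * Fhyp α 1 x + 4 * x / (α ^ 2 - 4) * Fhyp α 2 x := by
  have hA : (1:ℝ) < α / 2 := by linarith
  have hA0 : (0:ℝ) < α / 2 := by linarith
  have h1A : (0:ℝ) < 1 + α / 2 := by linarith
  have h2A : (0:ℝ) < 2 + α / 2 := by linarith
  have hα2 : α - 2 ≠ 0 := by intro h; linarith [h]
  have hα0 : α ≠ 0 := by positivity
  have hAn : ∀ n : ℕ, (0:ℝ) < α / 2 + n :=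
    fun n => add_pos_of_pos_of_nonneg hA0 (Nat.cast_nonneg n)
  have hAn1 : ∀ n : ℕ, (0:ℝ) < α / 2 + n - 1 := by
    intro n
    have : (0:ℝ) ≤ (n:ℝ) := Nat.cast_nonneg n
    linarith
  -- key product identities
  have keyQ : ∀ k : ℕ, (∏ i ∈ range k, (α / 2 + i)) * (α / 2 + k)
      = (α / 2) * ∏ i ∈ range k, (1 + α / 2 + i) := by
    intro k
    have h := prodP_shift (α / 2) k
    rw [prod_range_succ] at h
    have e : (∏ i ∈ range k, (α / 2 + 1 + i)) = ∏ i ∈ range k, (1 + α / 2 + i) :=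
      prod_congr rfl fun i _ => by ring
    rw [e] at h
    linear_combination h
  have keyR : ∀ k : ℕ, (∏ i ∈ range k, (α / 2 + i)) * (α / 2 + k) * (α / 2 + k + 1)
      = (α / 2) * (α / 2 + 1) * ∏ i ∈ range k, (2 + α / 2 + i) := by
    intro k
    have h1 := prodP_shift (α / 2) (k + 1)
    have h2 := prodP_shift (α / 2 + 1) k
    have e : (∏ i ∈ range k, (α / 2 + 1 + 1 + i)) = ∏ i ∈ range k, (2 + α / 2 + i) :=
      prod_congr rfl fun i _ => by ring
    rw [h2, e, prod_range_succ, prod_range_succ] at h1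
    push_cast at h1
    linear_combination h1
  have hQval : ∀ k : ℕ, (∏ i ∈ range k, (1 + α / 2 + i))
      = (∏ i ∈ range k, (α / 2 + i)) * (α / 2 + k) / (α / 2) := by
    intro k
    rw [eq_div_iff hA0.ne']
    linear_combination (keyQ k).symm
  have hRval : ∀ k : ℕ, (∏ i ∈ range k, (2 + α / 2 + i))
      = (∏ i ∈ range k, (α / 2 + i)) * (α / 2 + k) * (α / 2 + k + 1) / (α / 2 * (α / 2 + 1)) := by
    intro k
    rw [eq_div_iff (by positivity : α / 2 * (α / 2 + 1) ≠ 0)]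
    linear_combination (keyR k).symm
  -- rewrite LHS inner sum
  have hL : (∑' k : ℕ, x ^ k * (2 * (k : ℝ) + α) / (poch (1 + α / 2) k * (α - 2)))
      = ∑' k : ℕ, (α / (α - 2)) * (x ^ k / ∏ i ∈ range k, (α / 2 + i)) := by
    apply tsum_congr
    intro k
    rw [poch_eq_prod h1A, hQval k]
    have hPk : (0:ℝ) < ∏ i ∈ range k, (α / 2 + i) := prodP_pos hA0 k
    have hk := hAn k
    field_simp
    ring
  -- rewrite Fhyp 1
  have hF1 : Fhyp α 1 x
      = ∑' m : ℕ, (α / 2 / (α / 2 + m)) * ((-x) ^ m / m.factorial) := by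
    unfold Fhyp
    apply tsum_congr
    intro m
    simp only [Nat.cast_one]
    rw [poch_eq_prod hA0, poch_eq_prod h1A, hQval m]
    have hPm : (0:ℝ) < ∏ i ∈ range m, (α / 2 + i) := prodP_pos hA0 m
    have hm := hAn m
    have hfm : (0:ℝ) < m.factorial := by positivity
    field_simp
  -- rewrite Fhyp 2
  have hF2 : Fhyp α 2 x
      = ∑' m : ℕ, (α / 2 * (α / 2 + 1) / ((α / 2 + m) * (α / 2 + m + 1)))
          * ((-x) ^ m / m.factorial) := by
    unfold Fhyp
    apply tsum_congr
    intro m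
    simp only [Nat.cast_ofNat]
    rw [poch_eq_prod hA0, poch_eq_prod h2A, hRval m]
    have hPm : (0:ℝ) < ∏ i ∈ range m, (α / 2 + i) := prodP_pos hA0 m
    have hm := hAn m
    have hm1 : (0:ℝ) < α / 2 + m + 1 := by linarith
    have hfm : (0:ℝ) < m.factorial := by positivity
    field_simp
  rw [hL, tsum_mul_left, mul_left_comm, kummer hA hx, hF1, hF2]
  -- summability facts
  have hsA : Summable fun n : ℕ => (α / 2 / (α / 2 + n)) * ((-x) ^ n / n.factorial) := by
    apply summable_coeff hx (M := 1)
    intro n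
    rw [abs_of_nonneg (by positivity)]
    rw [div_le_one (hAn n)]
    have : (0:ℝ) ≤ (n:ℝ) := Nat.cast_nonneg n
    linarith
  have hsD : Summable fun n : ℕ =>
      (-(n : ℝ) / ((α / 2 + n - 1) * (α / 2 + n))) * ((-x) ^ n / n.factorial) := by
    apply summable_coeff hx (M := 1 / (α / 2 - 1))
    intro n
    have h1 := hAn1 n
    have h2 := hAn n
    have h3 : (0:ℝ) ≤ (n:ℝ) := Nat.cast_nonneg n
    rw [abs_div, abs_neg, Nat.abs_cast, abs_of_pos (by positivity)]
    rw [div_le_div_iff₀ (by positivity) (by linarith)]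
    nlinarith
  have hLAD : (∑' n : ℕ, ((α / 2 - 1) / (α / 2 + n - 1)) * ((-x) ^ n / n.factorial))
      = (∑' n : ℕ, (α / 2 / (α / 2 + n)) * ((-x) ^ n / n.factorial))
        + ∑' n : ℕ, (-(n : ℝ) / ((α / 2 + n - 1) * (α / 2 + n))) * ((-x) ^ n / n.factorial) := by
    rw [← Summable.tsum_add hsA hsD]
    apply tsum_congr
    intro n
    rw [← add_mul]
    congr 1
    have h1 := hAn1 n
    have h2 := hAn n
    have e : (α / 2 - 1) / (α / 2 + n - 1) - α / 2 / (α / 2 + n)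
        = -(n:ℝ) / ((α / 2 + n - 1) * (α / 2 + n)) := by
      rw [div_sub_div _ _ h1.ne' h2.ne', div_eq_div_iff (by positivity) (by positivity)]
      ring
    linarith [e]
  rw [hLAD, mul_add]
  congr 1
  rw [Summable.tsum_eq_zero_add hsD]
  simp only [Nat.cast_zero, neg_zero, zero_div, zero_mul, zero_add]
  rw [← tsum_mul_left, ← tsum_mul_left]
  apply tsum_congr
  intro n
  have h1 := hAn n
  have h2 : (0:ℝ) < α / 2 + n + 1 := by linarith
  have h3 : (0:ℝ) < (n:ℝ) + 1 := by positivity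
  have h4 : α ^ 2 - 4 ≠ 0 := by nlinarith
  have hfn : (0:ℝ) < n.factorial := by positivity
  have hc1 : α / 2 + ((n:ℕ) + 1 : ℕ) - 1 = α / 2 + n := by push_cast; ring
  have hc2 : α / 2 + ((n:ℕ) + 1 : ℕ) = α / 2 + n + 1 := by push_cast; ring
  rw [hc1, hc2, pow_succ, Nat.factorial_succ]
  push_cast
  field_simp
  ring
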